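/- The persistence barcode of a finite type persistence module over ℕ is unique: if M ≅ ⊕_{j=1}^m F_{I_j} ≅ ⊕_{k=1}^n F_{J_k} for intervals I_j, J_k ⊆ ℕ, then m = n and the multiset of intervals {I_j} equals the multiset {J_k}. -/

import Mathlib

open scoped ENNReal NNReal Classical

noncomputable section
/-! ### Persistence modules over ℕ -/

/-- A persistence module over `ℕ` with coefficients in the field `F`: a functor from
`(ℕ, ≤)` to `F`-vector spaces. -/
structure PersMod (F : Type) [Field F] where
  Vs : ℕ → Type
  [acg : ∀ n, AddCommGroup (Vs n)]
  [mod : ∀ n, Module F (Vs n)]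
  map : ∀ {i j : ℕ}, i ≤ j → Vs i →ₗ[F] Vs j
  map_id : ∀ i, map (le_refl i) = LinearMap.id
  map_comp : ∀ {i j k : ℕ} (hij : i ≤ j) (hjk : j ≤ k),
    map (hij.trans hjk) = (map hjk).comp (map hij)

attribute [instance] PersMod.acg PersMod.mod

/-- An interval in `ℕ`: a nonempty order-convex subset. -/
def IsInterval (I : Set ℕ) : Prop :=
  I.Nonempty ∧ ∀ r s t : ℕ, r ≤ s → s ≤ t → r ∈ I → t ∈ I → s ∈ I

def intervalSubmod (F : Type) [Field F] (I : Set ℕ) (t : ℕ) : Submodule F F :=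
  if t ∈ I then ⊤ else ⊥

/-- The interval module `F_I`: one-dimensional over the interval `I`, zero elsewhere,
with identity structure maps inside `I` and zero maps otherwise. -/
def intervalMod (F : Type) [Field F] (I : Set ℕ) (hI : IsInterval I) : PersMod F where
  Vs t := ↥(intervalSubmod F I t)
  map {i j} _ :=
    if h : i ∈ I ∧ j ∈ I then
      Submodule.inclusion (by simp [intervalSubmod, h.1, h.2]) else 0
  map_id i := by
    by_cases hi : i ∈ I
    · simp only [dif_pos (And.intro hi hi)]
      rfl
    · have : Subsingleton ↥(intervalSubmod F I i) := by
        rw [intervalSubmod, if_neg hi]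
        infer_instance
      apply LinearMap.ext
      intro x
      exact Subsingleton.elim _ _
  map_comp {i j k} hij hjk := by
    by_cases hj : j ∈ I
    · by_cases hi : i ∈ I
      · by_cases hk : k ∈ I
        · simp only [dif_pos (And.intro hi hk), dif_pos (And.intro hi hj),
            dif_pos (And.intro hj hk)]
          rfl
        · simp only [dif_neg (fun h : i ∈ I ∧ k ∈ I => hk h.2),
            dif_neg (fun h : j ∈ I ∧ k ∈ I => hk h.2)]
          simp
      · simp only [dif_neg (fun h : i ∈ I ∧ k ∈ I => hi h.1),
          dif_neg (fun h : i ∈ I ∧ j ∈ I => hi h.1)]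
        simp
    · have hik : ¬ (i ∈ I ∧ k ∈ I) := fun h => hj (hI.2 i j k hij hjk h.1 h.2)
      simp only [dif_neg hik, dif_neg (fun h : j ∈ I ∧ k ∈ I => hj h.1)]
      simp
  
/-- A persistence submodule: a family of subspaces invariant under the structure maps. -/
structure PersSubmod (F : Type) [Field F] (M : PersMod F) where
  p : ∀ n, Submodule F (M.Vs n)
  maps : ∀ (i j : ℕ) (h : i ≤ j), ∀ x ∈ p i, M.map h x ∈ p j

/-- Isomorphism of persistence modules: a natural family of linear isomorphisms. -/
def PersIso (F : Type) [Field F] (M N : PersMod F) : Prop :=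
  ∃ e : ∀ n, M.Vs n ≃ₗ[F] N.Vs n,
    ∀ (i j : ℕ) (h : i ≤ j) (x : M.Vs i), e j (M.map h x) = N.map h (e i x)

/-- Finite direct sum of interval modules, with barcode `Is`. -/
def dirSum (F : Type) [Field F] {m : ℕ} (Is : Fin m → Set ℕ)
    (hIs : ∀ j, IsInterval (Is j)) : PersMod F where
  Vs n := ∀ j : Fin m, (intervalMod F (Is j) (hIs j)).Vs n
  map h := LinearMap.pi fun k => ((intervalMod F (Is k) (hIs k)).map h).comp (LinearMap.proj k)
  map_id i := by
    apply LinearMap.ext; intro x; funext k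
    simp [PersMod.map_id]
  map_comp hij hjk := by
    apply LinearMap.ext; intro x; funext k
    show ((intervalMod F (Is k) (hIs k)).map (hij.trans hjk)) (x k) =
      ((intervalMod F (Is k) (hIs k)).map hjk)
        (((intervalMod F (Is k) (hIs k)).map hij) (x k))
    rw [PersMod.map_comp _ hij hjk]
    rfl
lemma interval_cases' {I : Set ℕ} (hI : IsInterval I) :
    (∃ b d, b ≤ d ∧ I = Set.Icc b d) ∨ ∃ b, I = Set.Ici b := by
  obtain ⟨hne, hconv⟩ := hI
  have hb : sInf I ∈ I := Nat.sInf_mem hne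
  by_cases hbd : BddAbove I
  · left
    have hd : sSup I ∈ I := Nat.sSup_mem hne hbd
    refine ⟨sInf I, sSup I, Nat.sInf_le hd, ?_⟩
    ext t
    constructor
    · intro ht; exact ⟨Nat.sInf_le ht, le_csSup hbd ht⟩
    · rintro ⟨h1, h2⟩; exact hconv _ _ _ h1 h2 hb hd
  · right
    refine ⟨sInf I, ?_⟩
    ext t
    constructor
    · intro ht; exact Nat.sInf_le ht
    · intro ht
      obtain ⟨s, hs, hts⟩ : ∃ s ∈ I, t ≤ s := by
        by_contra hc
        push_neg at hc
        exact hbd ⟨t, fun x hx => (hc x hx).le⟩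
      exact hconv _ _ _ ht hts hb hs

lemma exists_pair {I : Set ℕ} (hI : IsInterval I) (U : Multiset (Set ℕ))
    (hU : ∀ K ∈ U, IsInterval K) :
    ∃ b d, b ≤ d ∧ ∀ K ∈ U, (Set.Icc b d ⊆ K ↔ I ⊆ K) := by
  rcases interval_cases' hI with ⟨b, d, hbd, rfl⟩ | ⟨b, rfl⟩
  · exact ⟨b, d, hbd, fun K _ => Iff.rfl⟩
  · -- find d ≥ b avoiding all finite members of U
    have hfin : (⋃ K ∈ {K ∈ U.toFinset | K.Finite}, (K : Set ℕ)).Finite := by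
      apply Set.Finite.biUnion (Finset.finite_toSet _)
      intro K hK
      rw [Finset.mem_coe, Finset.mem_filter] at hK
      exact hK.2
    obtain ⟨N, hN⟩ := hfin.bddAbove
    refine ⟨b, max b (N + 1), le_max_left _ _, ?_⟩
    intro K hKU
    constructor
    · intro hsub
      have hdK : max b (N + 1) ∈ K := hsub ⟨le_max_left _ _, le_refl _⟩
      have hKinf : ¬ K.Finite := by
        intro hKf
        have : max b (N+1) ∈ ⋃ K ∈ {K ∈ U.toFinset | K.Finite}, (K : Set ℕ) := by
          refine Set.mem_biUnion ?_ hdK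
          exact Finset.mem_filter.2 ⟨Multiset.mem_toFinset.2 hKU, hKf⟩
        have := hN this
        omega
      rcases interval_cases' (hU K hKU) with ⟨b', d', _, rfl⟩ | ⟨b', rfl⟩
      · exact absurd (Set.finite_Icc _ _) hKinf
      · have hbK : b ∈ Set.Ici b' := hsub ⟨le_refl _, le_max_left _ _⟩
        exact fun t ht => Set.mem_Ici.2 (le_trans (Set.mem_Ici.1 hbK) (Set.mem_Ici.1 ht))
    · intro hsub t ht
      exact hsub ht.1

lemma multiset_ext_aux : ∀ (N : ℕ) (S T : Multiset (Set ℕ)),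
    S.card ≤ N →
    (∀ I ∈ S, IsInterval I) → (∀ I ∈ T, IsInterval I) →
    (∀ b d : ℕ, b ≤ d → S.countP (Set.Icc b d ⊆ ·) = T.countP (Set.Icc b d ⊆ ·)) →
    S = T := by
  have empty_case : ∀ (S T : Multiset (Set ℕ)), S = 0 →
      (∀ I ∈ T, IsInterval I) →
      (∀ b d : ℕ, b ≤ d → S.countP (Set.Icc b d ⊆ ·) = T.countP (Set.Icc b d ⊆ ·)) →
      T = 0 := by
    intro S T hS0 hT hcount
    by_contra hT0
    obtain ⟨J, hJ⟩ := Multiset.exists_mem_of_ne_zero hT0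
    obtain ⟨t, ht⟩ := (hT J hJ).1
    have h1 : 0 < T.countP (Set.Icc t t ⊆ ·) := by
      rw [Multiset.countP_pos]
      exact ⟨J, hJ, by simpa [Set.Icc_self, Set.singleton_subset_iff] using ht⟩
    rw [← hcount t t le_rfl, hS0] at h1
    simp at h1
  intro N
  induction N with
  | zero =>
    intro S T hcard hS hT hcount
    have hS0 : S = 0 := by
      rw [← Multiset.card_eq_zero]; omega
    rw [hS0, empty_case S T hS0 hT hcount]
  | succ n ih =>
    intro S T hcard hS hT hcount
    by_cases hS0 : S = 0
    · rw [hS0, empty_case S T hS0 hT hcount]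
    -- pick a maximal element of S + T
    have hne : (S + T).toFinset.Nonempty := by
      obtain ⟨I, hI⟩ := Multiset.exists_mem_of_ne_zero hS0
      exact ⟨I, Multiset.mem_toFinset.2 (Multiset.mem_add.2 (Or.inl hI))⟩
    obtain ⟨I, hImax'⟩ := Finset.exists_maximal hne
    have hImem : I ∈ (S + T).toFinset := hImax'.1
    have hImax : ∀ x ∈ (S + T).toFinset, ¬ I < x :=
      fun x hx hlt => lt_irrefl I (lt_of_lt_of_le hlt (hImax'.2 hx hlt.le))
    rw [Multiset.mem_toFinset, Multiset.mem_add] at hImem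
    have hUint : ∀ K ∈ S + T, IsInterval K := by
      intro K hK
      rcases Multiset.mem_add.1 hK with h | h
      · exact hS K h
      · exact hT K h
    have hIint : IsInterval I := hUint I (Multiset.mem_add.2 hImem)
    obtain ⟨b, d, hbd, hpair⟩ := exists_pair hIint (S + T) hUint
    -- I belongs to both S and T
    have key : ∀ (A B : Multiset (Set ℕ)),
        A + B = S + T ∨ B + A = S + T → I ∈ A →
        A.countP (Set.Icc b d ⊆ ·) = B.countP (Set.Icc b d ⊆ ·) → I ∈ B := by
      intro A B hAB hIA hc
      have hIU : I ∈ S + T := Multiset.mem_add.2 hImem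
      have h1 : 0 < A.countP (Set.Icc b d ⊆ ·) := by
        rw [Multiset.countP_pos]
        exact ⟨I, hIA, (hpair I hIU).2 subset_rfl⟩
      rw [hc, Multiset.countP_pos] at h1
      obtain ⟨J, hJB, hJsub⟩ := h1
      have hJU : J ∈ S + T := by
        rcases hAB with h | h
        · rw [← h]; exact Multiset.mem_add.2 (Or.inr hJB)
        · rw [← h]; exact Multiset.mem_add.2 (Or.inl hJB)
      have hIJ : I ⊆ J := (hpair J hJU).1 hJsub
      have : I = J := by
        by_contra hne'
        exact hImax J (Multiset.mem_toFinset.2 hJU) (lt_of_le_of_ne hIJ hne')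
      rw [this]; exact hJB
    have hIS : I ∈ S ∧ I ∈ T := by
      rcases hImem with h | h
      · exact ⟨h, key S T (Or.inl rfl) h (hcount b d hbd)⟩
      · exact ⟨key T S (Or.inr rfl) h (hcount b d hbd).symm, h⟩
    -- erase I from both sides and apply induction
    have hScons : I ::ₘ S.erase I = S := Multiset.cons_erase hIS.1
    have hTcons : I ::ₘ T.erase I = T := Multiset.cons_erase hIS.2
    have hcard' : (S.erase I).card ≤ n := by
      have := Multiset.card_cons I (S.erase I)
      rw [hScons] at this
      omega
    have hcount' : ∀ b d : ℕ, b ≤ d →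
        (S.erase I).countP (Set.Icc b d ⊆ ·) = (T.erase I).countP (Set.Icc b d ⊆ ·) := by
      intro b' d' hbd'
      have h1 := hcount b' d' hbd'
      rw [← hScons, ← hTcons, Multiset.countP_cons, Multiset.countP_cons] at h1
      omega
    have := ih (S.erase I) (T.erase I) hcard'
      (fun K hK => hS K (Multiset.mem_of_mem_erase hK))
      (fun K hK => hT K (Multiset.mem_of_mem_erase hK)) hcount'
    rw [← hScons, ← hTcons, this]

section LinAlg
variable {F : Type} [Field F]

/-- Range of a "diagonal" pi map. -/
lemma range_pi_diag {ι : Type} [Fintype ι] {V W : ι → Type}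
    [∀ i, AddCommGroup (V i)] [∀ i, Module F (V i)]
    [∀ i, AddCommGroup (W i)] [∀ i, Module F (W i)]
    (f : ∀ i, V i →ₗ[F] W i) :
    LinearMap.range (LinearMap.pi fun k => (f k).comp (LinearMap.proj k)) =
      Submodule.pi Set.univ (fun k => LinearMap.range (f k)) := by
  ext y
  simp only [LinearMap.mem_range, Submodule.mem_pi, Set.mem_univ, forall_true_left,
    LinearMap.mem_range]
  constructor
  · rintro ⟨x, rfl⟩ k
    exact ⟨x k, rfl⟩
  · intro hy
    choose x hx using hy
    exact ⟨x, funext fun k => by simp [LinearMap.pi_apply, hx k]⟩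

/-- A submodule pi over univ is linearly equivalent to the pi of the submodules. -/
def submodulePiEquiv {ι : Type} {V : ι → Type}
    [∀ i, AddCommGroup (V i)] [∀ i, Module F (V i)] (p : ∀ i, Submodule F (V i)) :
    (Submodule.pi Set.univ p) ≃ₗ[F] ∀ i, p i where
  toFun x k := ⟨x.1 k, x.2 k (Set.mem_univ k)⟩
  map_add' x y := rfl
  map_smul' c x := rfl
  invFun y := ⟨fun k => (y k).1, fun k _ => (y k).2⟩
  left_inv x := rfl
  right_inv y := rfl

lemma finrank_submodule_pi {ι : Type} [Fintype ι] {V : ι → Type}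
    [∀ i, AddCommGroup (V i)] [∀ i, Module F (V i)]
    [∀ i, FiniteDimensional F (V i)] (p : ∀ i, Submodule F (V i)) :
    Module.finrank F (Submodule.pi Set.univ p) = ∑ i, Module.finrank F (p i) := by
  rw [LinearEquiv.finrank_eq (submodulePiEquiv p), Module.finrank_pi_fintype]

lemma finrank_intervalSubmod (I : Set ℕ) {t : ℕ} (ht : t ∈ I) :
    Module.finrank F ↥(intervalSubmod F I t) = 1 := by
  rw [intervalSubmod, if_pos ht, finrank_top, Module.finrank_self]

lemma rank_intervalMod_map (I : Set ℕ) (hI : IsInterval I) {b d : ℕ} (h : b ≤ d) :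
    Module.finrank F (LinearMap.range ((intervalMod F I hI).map h)) =
      if b ∈ I ∧ d ∈ I then 1 else 0 := by
  have hmap : (intervalMod F I hI).map h =
      (if h' : b ∈ I ∧ d ∈ I then
        Submodule.inclusion (by simp [intervalSubmod, h'.1, h'.2]) else 0) := rfl
  by_cases h' : b ∈ I ∧ d ∈ I
  · rw [if_pos h', hmap, dif_pos h']
    exact (LinearMap.finrank_range_of_inj (Submodule.inclusion_injective _)).trans
      (finrank_intervalSubmod I h'.1)
  · rw [if_neg h']
    have h0 : LinearMap.range ((intervalMod F I hI).map h) = ⊥ := by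
      rw [hmap, dif_neg h']; exact LinearMap.range_zero
    rw [h0, finrank_bot]

lemma rank_dirSum_map {m : ℕ} (Is : Fin m → Set ℕ) (hIs : ∀ j, IsInterval (Is j))
    {b d : ℕ} (h : b ≤ d) :
    Module.finrank F (LinearMap.range ((dirSum F Is hIs).map h)) =
      (Finset.univ.filter fun j => b ∈ Is j ∧ d ∈ Is j).card := by
  haveI : ∀ k : Fin m, FiniteDimensional F ((intervalMod F (Is k) (hIs k)).Vs d) :=
    fun k => show FiniteDimensional F ↥(intervalSubmod F (Is k) d) from inferInstance
  have : (dirSum F Is hIs).map h = LinearMap.pi fun k =>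
      ((intervalMod F (Is k) (hIs k)).map h).comp (LinearMap.proj k) := rfl
  show Module.finrank F (LinearMap.range (LinearMap.pi fun k =>
      ((intervalMod F (Is k) (hIs k)).map h).comp (LinearMap.proj k))) = _
  rw [range_pi_diag]
  refine Eq.trans (LinearEquiv.finrank_eq (submodulePiEquiv
    (fun k => LinearMap.range ((intervalMod F (Is k) (hIs k)).map h)))) ?_
  rw [Module.finrank_pi_fintype, Finset.card_filter]
  congr 1
  funext j
  rw [rank_intervalMod_map (Is j) (hIs j) h]

lemma rank_iso_inv {M N : PersMod F} (hiso : PersIso F M N) {b d : ℕ} (h : b ≤ d) :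
    Module.finrank F (LinearMap.range (M.map h)) =
      Module.finrank F (LinearMap.range (N.map h)) := by
  obtain ⟨e, he⟩ := hiso
  have hcomp : N.map h = ((e d).toLinearMap.comp ((M.map h).comp (e b).symm.toLinearMap)) := by
    apply LinearMap.ext
    intro x
    simp only [LinearMap.comp_apply, LinearEquiv.coe_coe]
    rw [he b d h ((e b).symm x), LinearEquiv.apply_symm_apply]
  rw [hcomp, LinearMap.range_comp, LinearMap.range_comp,
    LinearEquiv.range, Submodule.map_top]
  exact (LinearEquiv.finrank_map_eq (e d) _).symm
end LinAlg

lemma interval_mem_iff {I : Set ℕ} (hI : IsInterval I) {b d : ℕ} (h : b ≤ d) :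
    Set.Icc b d ⊆ I ↔ b ∈ I ∧ d ∈ I := by
  constructor
  · intro hs; exact ⟨hs ⟨le_refl b, h⟩, hs ⟨h, le_refl d⟩⟩
  · rintro ⟨hb, hd⟩ t ⟨h1, h2⟩; exact hI.2 _ _ _ h1 h2 hb hd

lemma count_eq {m : ℕ} (Is : Fin m → Set ℕ) (hIs : ∀ j, IsInterval (Is j))
    {b d : ℕ} (h : b ≤ d) :
    (Multiset.map Is Finset.univ.val).countP (Set.Icc b d ⊆ ·) =
      (Finset.univ.filter fun j => b ∈ Is j ∧ d ∈ Is j).card := by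
  rw [Multiset.countP_map]
  rw [show (Finset.univ.filter fun j => b ∈ Is j ∧ d ∈ Is j).card =
    Multiset.card (Finset.univ.val.filter fun j => b ∈ Is j ∧ d ∈ Is j) from by
      rw [← Finset.filter_val]; rfl]
  congr 1
  apply Multiset.filter_congr
  intro j _
  exact interval_mem_iff (hIs j) h

lemma equiv_of_multiset_map_eq {α : Type} {m n : ℕ} (f : Fin m → α) (g : Fin n → α)
    (h : Multiset.map f Finset.univ.val = Multiset.map g Finset.univ.val) :
    ∃ e : Fin m ≃ Fin n, ∀ j, f j = g (e j) := by
  have hcard : ∀ a : α, Fintype.card {j // f j = a} = Fintype.card {k // g k = a} := by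
    intro a
    have hc := congrArg (Multiset.count a) h
    rw [Multiset.count_map, Multiset.count_map] at hc
    rw [Fintype.card_subtype, Fintype.card_subtype]
    rw [show (Finset.univ.filter fun j => f j = a).card =
      Multiset.card (Finset.univ.val.filter fun j => f j = a) from by
        rw [← Finset.filter_val]; rfl]
    rw [show (Finset.univ.filter fun k => g k = a).card =
      Multiset.card (Finset.univ.val.filter fun k => g k = a) from by
        rw [← Finset.filter_val]; rfl]
    rw [show (Finset.univ.val.filter fun j => f j = a) =
      (Finset.univ.val.filter fun j => a = f j) from
        Multiset.filter_congr fun j _ => eq_comm]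
    rw [show (Finset.univ.val.filter fun k => g k = a) =
      (Finset.univ.val.filter fun k => a = g k) from
        Multiset.filter_congr fun k _ => eq_comm]
    exact hc
  refine ⟨((Equiv.sigmaFiberEquiv f).symm.trans
    (Equiv.sigmaCongrRight fun a => Fintype.equivOfCardEq (hcard a))).trans
    (Equiv.sigmaFiberEquiv g), fun j => ?_⟩
  exact ((Fintype.equivOfCardEq (hcard (f j)) ⟨j, rfl⟩).2).symm

theorem barcode_unique (F : Type) [Field F] {m n : ℕ}
    (Is : Fin m → Set ℕ) (Js : Fin n → Set ℕ)
    (hIs : ∀ j, IsInterval (Is j)) (hJs : ∀ k, IsInterval (Js k))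
    (hiso : PersIso F (dirSum F Is hIs) (dirSum F Js hJs)) :
    ∃ e : Fin m ≃ Fin n, ∀ j : Fin m, Is j = Js (e j) := by
  have hcount : ∀ b d : ℕ, b ≤ d →
      (Multiset.map Is Finset.univ.val).countP (Set.Icc b d ⊆ ·) =
      (Multiset.map Js Finset.univ.val).countP (Set.Icc b d ⊆ ·) := by
    intro b d h
    rw [count_eq Is hIs h, count_eq Js hJs h, ← rank_dirSum_map (F := F) Is hIs h,
      ← rank_dirSum_map (F := F) Js hJs h]
    exact rank_iso_inv hiso h
  have hmult : Multiset.map Is Finset.univ.val = Multiset.map Js Finset.univ.val := by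
    apply multiset_ext_aux (Multiset.map Is Finset.univ.val).card _ _ le_rfl
    · intro I hI
      obtain ⟨j, _, rfl⟩ := Multiset.mem_map.1 hI
      exact hIs j
    · intro J hJ
      obtain ⟨k, _, rfl⟩ := Multiset.mem_map.1 hJ
      exact hJs k
    · exact hcount
  exact equiv_of_multiset_map_eq Is Js hmult
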